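/- For $\lambda > 1$ and even positive integers $p > s$, the arithmetic mean of $1, \lambda, \ldots, \lambda^{p+s-1}$ is at least the arithmetic mean of $\lambda^{s}, \lambda^{s+1}, \ldots, \lambda^{p-1}$; equivalently, $\frac{\lambda^{p+s}-1}{p+s} \geq \frac{\lambda^{p}-\lambda^{s}}{p-s}$. -/
import Mathlib

lemma pair_ineq (lam : ℝ) (h : 1 ≤ lam) (a c d : ℕ) (hac : a ≤ c) (had : a ≤ d) :
    lam ^ c + lam ^ d ≤ lam ^ a + lam ^ (c + d - a) := by
  obtain ⟨u, rfl⟩ := Nat.exists_eq_add_of_le hac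
  have h1 : a + u + d - a = d + u := by omega
  rw [h1, pow_add, pow_add]
  have h2 : (1:ℝ) ≤ lam ^ u := one_le_pow₀ h
  have h3 : lam ^ a ≤ lam ^ d := pow_le_pow_right₀ h had
  nlinarith

theorem stmt1 (lam : ℝ) (hlam : 1 < lam) (p s : ℕ) (hp : Even p) (hs : Even s)
    (hs0 : 0 < s) (hsp : s < p) :
    (lam ^ p - lam ^ s) / ((p : ℝ) - (s : ℝ)) ≤ (lam ^ (p + s) - 1) / ((p : ℝ) + (s : ℝ)) := by
  obtain ⟨m, hm⟩ : ∃ m, p = s + m := ⟨p - s, by omega⟩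
  have hm0 : 0 < m := by omega
  subst hm
  have hl1 : (1:ℝ) ≤ lam := hlam.le
  have hl0 : (0:ℝ) < lam - 1 := by linarith
  -- key double-sum inequality
  have key : (s:ℝ) * (∑ j ∈ Finset.range m, (lam ^ (s + j) + lam ^ (m + s - 1 - j)))
      ≤ (m:ℝ) * (∑ i ∈ Finset.range s, (lam ^ i + lam ^ (m + 2*s - 1 - i))) := by
    have L : (s:ℝ) * (∑ j ∈ Finset.range m, (lam ^ (s + j) + lam ^ (m + s - 1 - j)))
        = ∑ i ∈ Finset.range s, ∑ j ∈ Finset.range m,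
            (lam ^ (s + j) + lam ^ (m + s - 1 - j)) := by
      rw [Finset.sum_const, nsmul_eq_mul, Finset.card_range]
    have R : (m:ℝ) * (∑ i ∈ Finset.range s, (lam ^ i + lam ^ (m + 2*s - 1 - i)))
        = ∑ i ∈ Finset.range s, ∑ j ∈ Finset.range m,
            (lam ^ i + lam ^ (m + 2*s - 1 - i)) := by
      rw [Finset.mul_sum]
      refine Finset.sum_congr rfl fun i _ => ?_
      rw [Finset.sum_const, nsmul_eq_mul, Finset.card_range]
    rw [L, R]
    refine Finset.sum_le_sum fun i hi => Finset.sum_le_sum fun j hj => ?_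
    simp only [Finset.mem_range] at hi hj
    have h1 : (s + j) + (m + s - 1 - j) - i = m + 2*s - 1 - i := by omega
    have := pair_ineq lam hl1 i (s + j) (m + s - 1 - j) (by omega) (by omega)
    rw [h1] at this
    exact this
  -- reflect sums
  have refl1 : ∑ j ∈ Finset.range m, lam ^ (m + s - 1 - j)
      = ∑ j ∈ Finset.range m, lam ^ (s + j) := by
    rw [← Finset.sum_range_reflect (fun j => lam ^ (s + j)) m]
    refine Finset.sum_congr rfl fun j hj => ?_
    simp only [Finset.mem_range] at hj
    congr 1
    omega
  have refl2 : ∑ i ∈ Finset.range s, lam ^ (m + 2*s - 1 - i)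
      = ∑ i ∈ Finset.range s, lam ^ (m + s + i) := by
    rw [← Finset.sum_range_reflect (fun i => lam ^ (m + s + i)) s]
    refine Finset.sum_congr rfl fun i hi => ?_
    simp only [Finset.mem_range] at hi
    congr 1
    omega
  rw [Finset.sum_add_distrib, Finset.sum_add_distrib, refl1, refl2] at key
  -- closed forms
  have Gs := geom_sum_mul lam s
  have Gm := geom_sum_mul lam m
  set Es : ℝ := ∑ i ∈ Finset.range s, lam ^ i with hEs
  set Em : ℝ := ∑ j ∈ Finset.range m, lam ^ j with hEm
  have e1 : ∑ j ∈ Finset.range m, lam ^ (s + j) = lam ^ s * Em := by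
    rw [hEm, Finset.mul_sum]
    exact Finset.sum_congr rfl fun j _ => by rw [pow_add]
  have e2 : ∑ i ∈ Finset.range s, lam ^ (m + s + i) = lam ^ (m + s) * Es := by
    rw [hEs, Finset.mul_sum]
    exact Finset.sum_congr rfl fun i _ => by rw [pow_add]
  rw [e1, e2] at key
  -- key : s * (lam^s*Em + lam^s*Em) ≤ m * (Es + lam^(m+s)*Es)
  -- multiply by (lam - 1) > 0
  have key2 : (s:ℝ) * (2 * lam ^ s * (lam ^ m - 1))
      ≤ (m:ℝ) * ((lam ^ s - 1) + lam ^ (m + s) * (lam ^ s - 1)) := by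
    have := mul_le_mul_of_nonneg_right key hl0.le
    calc (s:ℝ) * (2 * lam ^ s * (lam ^ m - 1))
        = (s:ℝ) * (lam ^ s * Em + lam ^ s * Em) * (lam - 1) := by
          rw [← Gm]; ring
      _ ≤ (m:ℝ) * (Es + lam ^ (m + s) * Es) * (lam - 1) := this
      _ = (m:ℝ) * ((lam ^ s - 1) + lam ^ (m + s) * (lam ^ s - 1)) := by
          rw [← Gs]; ring
  -- finish
  have cast1 : ((s + m : ℕ) : ℝ) = (s:ℝ) + (m:ℝ) := by push_cast; ring
  have hmr : (0:ℝ) < (m:ℝ) := by exact_mod_cast hm0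
  have hsr : (0:ℝ) ≤ (s:ℝ) := Nat.cast_nonneg s
  have hd1 : (0:ℝ) < ((s+m:ℕ):ℝ) - (s:ℝ) := by rw [cast1]; linarith
  have hd2 : (0:ℝ) < ((s+m:ℕ):ℝ) + (s:ℝ) := by rw [cast1]; linarith
  rw [div_le_div_iff₀ hd1 hd2]
  rw [cast1]
  have hpm : lam ^ (s + m) = lam ^ s * lam ^ m := pow_add lam s m
  have hps : lam ^ (s + m + s) = lam ^ s * lam ^ m * lam ^ s := by
    rw [pow_add, hpm]
  have hms : lam ^ (m + s) = lam ^ m * lam ^ s := pow_add lam m s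
  rw [hpm, hps]
  rw [hms] at key2
  nlinarith [key2, pow_pos (by linarith : (0:ℝ) < lam) s, pow_pos (by linarith : (0:ℝ) < lam) m]
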